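/- Let R be a commutative ℚ-algebra with a pre-λ-structure λ_t and a ring endomorphism aug : R → R such that aug ∘ aug = aug and, for all x ∈ R and i ≥ 0, aug(λ^i(x)) = C(aug(x), i), where C(z,i) := z(z−1)···(z−i+1)/i! for z ∈ R. Suppose V ∈ R is such that λ_t(V) is a polynomial in t of degree at most d ≥ 1 and aug(λ^d(V)) is a unit of R. Then aug(V) = d·1, and consequently aug(λ^i(V)) = C(d,i)·1 for all i ≥ 0; in particular aug(λ^i(V)) = 0 for i > d. -/

import Mathlib

/-!
STATEMENT 3: Let `R` be a commutative ℚ-algebra with a pre-λ-structure `l` and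
a ring endomorphism `aug` with `aug ∘ aug = aug` and
`aug (λ^i(x)) = C(aug x, i)` (generalized binomial coefficient) for all `x, i`.
If `λ_t(V)` is a polynomial of degree at most `d ≥ 1` and `aug (λ^d(V))` is a
unit, then `aug V = d·1`, and consequently `aug (λ^i(V)) = C(d, i)·1` for all
`i`; in particular `aug (λ^i(V)) = 0` for `i > d`.
-/

/-- The generalized binomial coefficient `C(z, i) = z(z-1)⋯(z-i+1)/i!` for an
element `z` of a `ℚ`-algebra. -/
noncomputable def qBinom {R : Type*} [CommRing R] [Algebra ℚ R] (z : R) (i : ℕ) : R :=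
  ((i.factorial : ℚ)⁻¹) • ∏ k ∈ Finset.range i, (z - (k : R))

theorem aug_of_lambda_positive_eq_degree
    {R : Type*} [CommRing R] [Algebra ℚ R]
    (l : R → PowerSeries R) (aug : R →+* R)
    -- pre-λ-structure axioms
    (hl0 : ∀ x : R, PowerSeries.coeff 0 (l x) = 1)
    (hl1 : ∀ x : R, PowerSeries.coeff 1 (l x) = x)
    (hladd : ∀ x y : R, l (x + y) = l x * l y)
    (hlone : l 1 = 1 + PowerSeries.X)
    -- augmentation axioms
    (haug : aug.comp aug = aug)
    (haugl : ∀ (x : R) (i : ℕ), aug (PowerSeries.coeff i (l x)) = qBinom (aug x) i)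
    -- V has λ-degree at most d and invertible augmented top λ-coefficient
    (V : R) (d : ℕ) (hd : 1 ≤ d)
    (hdeg : ∀ i, d < i → PowerSeries.coeff i (l V) = 0)
    (hunit : IsUnit (aug (PowerSeries.coeff d (l V)))) :
    aug V = (d : R) ∧
    (∀ i : ℕ, aug (PowerSeries.coeff i (l V)) = qBinom ((d : R)) i) ∧
    (∀ i : ℕ, d < i → aug (PowerSeries.coeff i (l V)) = 0) := by
  -- The product ∏_{k<d} (aug V - k) is a unit
  have hprodunit : IsUnit (∏ k ∈ Finset.range d, (aug V - (k : R))) := by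
    have h := hunit
    rw [haugl, qBinom, Algebra.smul_def] at h
    exact isUnit_of_mul_isUnit_right h
  -- The product ∏_{k<d+1} (aug V - k) is zero
  have hprod0 : ∏ k ∈ Finset.range (d + 1), (aug V - (k : R)) = 0 := by
    have h : aug (PowerSeries.coeff (d + 1) (l V)) = 0 := by
      rw [hdeg (d + 1) (Nat.lt_succ_self d), map_zero]
    rw [haugl, qBinom] at h
    have hne : ((d + 1).factorial : ℚ) ≠ 0 := by
      exact_mod_cast (Nat.factorial_pos (d + 1)).ne'
    have := congrArg (fun r => ((d + 1).factorial : ℚ) • r) h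
    simpa [smul_smul, mul_inv_cancel₀ hne] using this
  rw [Finset.prod_range_succ] at hprod0
  have hV : aug V = (d : R) := by
    have := (IsUnit.mul_right_eq_zero hprodunit).mp hprod0
    exact sub_eq_zero.mp this
  refine ⟨hV, fun i => by rw [haugl, hV], fun i hi => by rw [hdeg i hi, map_zero]⟩
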